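/- If A = A' ⊗ A'' is a tensor product of graded Artinian K-algebras and there exist nonzero kernel elements of the degree-1 multiplication maps μ_{L'} in degree i on A' and μ_{L''} in degree j on A'', and moreover dim_K A_{i+j} ≤ dim_K A_{i+j+1}, then the multiplication map μ_{L'+L''} : A_{i+j} → A_{i+j+1} is not injective and not surjective (it fails to have maximal rank). -/

import Mathlib

open TensorProduct

/-- The degree-`n` graded piece of `A' ⊗[K] A''`, namely `⊕_{p+q=n} A'_p ⊗ A''_q`,
realized as the span of the images of `A'_p ⊗ A''_{n-p}` for `0 ≤ p ≤ n`. -/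
noncomputable def tensorPiece {K A' A'' : Type*} [Field K] [CommRing A'] [CommRing A'']
    [Algebra K A'] [Algebra K A''] (𝒜' : ℕ → Submodule K A') (𝒜'' : ℕ → Submodule K A'')
    (n : ℕ) : Submodule K (A' ⊗[K] A'') :=
  ⨆ p ∈ Finset.range (n + 1),
    LinearMap.range (TensorProduct.mapIncl (𝒜' p) (𝒜'' (n - p)))

lemma tmul_mem_tensorPiece {K A' A'' : Type*} [Field K] [CommRing A'] [CommRing A'']
    [Algebra K A'] [Algebra K A''] (𝒜' : ℕ → Submodule K A') (𝒜'' : ℕ → Submodule K A'')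
    {n p : ℕ} (hp : p ≤ n) {a : A'} {b : A''} (ha : a ∈ 𝒜' p) (hb : b ∈ 𝒜'' (n - p)) :
    a ⊗ₜ[K] b ∈ tensorPiece 𝒜' 𝒜'' n := by
  apply Submodule.mem_iSup_of_mem p
  apply Submodule.mem_iSup_of_mem (Finset.mem_range.2 (by omega))
  exact ⟨(⟨a, ha⟩ : 𝒜' p) ⊗ₜ[K] (⟨b, hb⟩ : 𝒜'' (n - p)), rfl⟩

lemma mul_mem_tensorPiece {K A' A'' : Type*} [Field K] [CommRing A'] [CommRing A'']
    [Algebra K A'] [Algebra K A''] (𝒜' : ℕ → Submodule K A') (𝒜'' : ℕ → Submodule K A'')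
    [GradedAlgebra 𝒜'] [GradedAlgebra 𝒜'']
    {L' : A'} {L'' : A''} (hL' : L' ∈ 𝒜' 1) (hL'' : L'' ∈ 𝒜'' 1)
    (n : ℕ) {x : A' ⊗[K] A''} (hx : x ∈ tensorPiece 𝒜' 𝒜'' n) :
    x * (L' ⊗ₜ[K] (1 : A'') + (1 : A') ⊗ₜ[K] L'') ∈ tensorPiece 𝒜' 𝒜'' (n + 1) := by
  set E : A' ⊗[K] A'' := L' ⊗ₜ[K] (1 : A'') + (1 : A') ⊗ₜ[K] L''
  have key : tensorPiece 𝒜' 𝒜'' n ≤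
      Submodule.comap (LinearMap.mulRight K E) (tensorPiece 𝒜' 𝒜'' (n + 1)) := by
    refine iSup₂_le fun p hp => ?_
    rw [Finset.mem_range] at hp
    rintro _ ⟨w, rfl⟩
    induction w with
    | zero => simpa using (tensorPiece 𝒜' 𝒜'' (n + 1)).zero_mem
    | add u v hu hv =>
        simp only [map_add, Submodule.mem_comap, LinearMap.mulRight_apply] at *
        exact Submodule.add_mem _ hu hv
    | tmul a b =>
        simp only [Submodule.mem_comap, LinearMap.mulRight_apply, mapIncl,
          TensorProduct.map_tmul, Submodule.coe_subtype]
        rw [mul_add, Algebra.TensorProduct.tmul_mul_tmul,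
          Algebra.TensorProduct.tmul_mul_tmul, mul_one, mul_one]
        refine Submodule.add_mem _ ?_ ?_
        · have h1 : (a : A') * L' ∈ 𝒜' (p + 1) := SetLike.mul_mem_graded a.2 hL'
          have h2 : (b : A'') ∈ 𝒜'' (n + 1 - (p + 1)) := by
            simpa using b.2
          exact tmul_mem_tensorPiece 𝒜' 𝒜'' (by omega) h1 h2
        · have h1 : (b : A'') * L'' ∈ 𝒜'' (n - p + 1) := SetLike.mul_mem_graded b.2 hL''
          have h2 : (b : A'') * L'' ∈ 𝒜'' (n + 1 - p) := by
            have : n - p + 1 = n + 1 - p := by omega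
            rwa [this] at h1
          exact tmul_mem_tensorPiece 𝒜' 𝒜'' (by omega) a.2 h2
  exact key hx

lemma tmul_ne_zero' {K A' A'' : Type*} [Field K] [CommRing A'] [CommRing A'']
    [Algebra K A'] [Algebra K A''] {a : A'} {b : A''} (ha : a ≠ 0) (hb : b ≠ 0) :
    a ⊗ₜ[K] b ≠ (0 : A' ⊗[K] A'') := by
  obtain ⟨f, hf⟩ : ∃ f : Module.Dual K A', f a ≠ 0 := by
    by_contra h
    push_neg at h
    exact ha ((Module.forall_dual_apply_eq_zero_iff K a).1 h)
  obtain ⟨g, hg⟩ : ∃ g : Module.Dual K A'', g b ≠ 0 := by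
    by_contra h
    push_neg at h
    exact hb ((Module.forall_dual_apply_eq_zero_iff K b).1 h)
  intro h0
  have : (TensorProduct.lid K K) (TensorProduct.map f g (a ⊗ₜ[K] b)) = f a * g b := by
    simp [smul_eq_mul]
  rw [h0] at this
  simp only [map_zero] at this
  exact mul_ne_zero hf hg this.symm

/-- If `A = A' ⊗ A''` is a tensor product of graded Artinian `K`-algebras, there are
nonzero kernel elements of `μ_{L'}` in degree `i` on `A'` and of `μ_{L''}` in degree `j`
on `A''`, and `dim_K A_{i+j} ≤ dim_K A_{i+j+1}`, then
`μ_{L'+L''} : A_{i+j} → A_{i+j+1}` is neither injective nor surjective. -/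
theorem stmt2 {K A' A'' : Type*} [Field K]
    [CommRing A'] [CommRing A''] [Algebra K A'] [Algebra K A'']
    (𝒜' : ℕ → Submodule K A') (𝒜'' : ℕ → Submodule K A'')
    [GradedAlgebra 𝒜'] [GradedAlgebra 𝒜'']
    [FiniteDimensional K A'] [FiniteDimensional K A'']
    (i j : ℕ) (L' : A') (L'' : A'') (hL' : L' ∈ 𝒜' 1) (hL'' : L'' ∈ 𝒜'' 1)
    (hker' : ∃ α ∈ 𝒜' i, α ≠ 0 ∧ α * L' = 0)
    (hker'' : ∃ β ∈ 𝒜'' j, β ≠ 0 ∧ β * L'' = 0)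
    (hdim : Module.finrank K (tensorPiece 𝒜' 𝒜'' (i + j)) ≤
      Module.finrank K (tensorPiece 𝒜' 𝒜'' (i + j + 1))) :
    (∃ x ∈ tensorPiece 𝒜' 𝒜'' (i + j), x ≠ 0 ∧
        x * (L' ⊗ₜ[K] (1 : A'') + (1 : A') ⊗ₜ[K] L'') = 0) ∧
      (∃ y ∈ tensorPiece 𝒜' 𝒜'' (i + j + 1), ∀ x ∈ tensorPiece 𝒜' 𝒜'' (i + j),
        x * (L' ⊗ₜ[K] (1 : A'') + (1 : A') ⊗ₜ[K] L'') ≠ y) := by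
  obtain ⟨α, hαmem, hα0, hαL⟩ := hker'
  obtain ⟨β, hβmem, hβ0, hβL⟩ := hker''
  set E : A' ⊗[K] A'' := L' ⊗ₜ[K] (1 : A'') + (1 : A') ⊗ₜ[K] L'' with hE
  have hβmem' : β ∈ 𝒜'' (i + j - i) := by simpa using hβmem
  have hx0mem : α ⊗ₜ[K] β ∈ tensorPiece 𝒜' 𝒜'' (i + j) :=
    tmul_mem_tensorPiece 𝒜' 𝒜'' (Nat.le_add_right i j) hαmem hβmem'
  have hx0ne : α ⊗ₜ[K] β ≠ 0 := tmul_ne_zero' hα0 hβ0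
  have hx0mul : (α ⊗ₜ[K] β) * E = 0 := by
    rw [hE, mul_add, Algebra.TensorProduct.tmul_mul_tmul,
      Algebra.TensorProduct.tmul_mul_tmul, mul_one, mul_one, hαL, hβL,
      TensorProduct.zero_tmul, TensorProduct.tmul_zero, add_zero]
  refine ⟨⟨α ⊗ₜ[K] β, hx0mem, hx0ne, hx0mul⟩, ?_⟩
  -- the restricted multiplication map
  let f : tensorPiece 𝒜' 𝒜'' (i + j) →ₗ[K] tensorPiece 𝒜' 𝒜'' (i + j + 1) :=
    ((LinearMap.mulRight K E).domRestrict (tensorPiece 𝒜' 𝒜'' (i + j))).codRestrict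
      (tensorPiece 𝒜' 𝒜'' (i + j + 1))
      (fun x => mul_mem_tensorPiece 𝒜' 𝒜'' hL' hL'' (i + j) x.2)
  haveI : FiniteDimensional K (A' ⊗[K] A'') := Module.Finite.tensorProduct K A' A''
  have hker : (⟨α ⊗ₜ[K] β, hx0mem⟩ : tensorPiece 𝒜' 𝒜'' (i + j)) ∈ LinearMap.ker f := by
    rw [LinearMap.mem_ker]
    apply Subtype.ext
    exact hx0mul
  have hkerne : LinearMap.ker f ≠ ⊥ := by
    intro h
    rw [h, Submodule.mem_bot] at hker
    exact hx0ne (congrArg Subtype.val hker)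
  have hkerpos : 0 < Module.finrank K (LinearMap.ker f) := by
    haveI : Nontrivial (LinearMap.ker f) := Submodule.nontrivial_iff_ne_bot.2 hkerne
    exact Module.finrank_pos (R := K) (M := LinearMap.ker f)
  have hrank := LinearMap.finrank_range_add_finrank_ker f
  have hlt : Module.finrank K (LinearMap.range f) <
      Module.finrank K (tensorPiece 𝒜' 𝒜'' (i + j + 1)) := by omega
  have hne : LinearMap.range f ≠ ⊤ := by
    intro h
    rw [h, finrank_top] at hlt
    exact lt_irrefl _ hlt
  obtain ⟨y, hy⟩ : ∃ y : tensorPiece 𝒜' 𝒜'' (i + j + 1), y ∉ LinearMap.range f := by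
    by_contra h
    push_neg at h
    exact hne (Submodule.eq_top_iff'.2 h)
  refine ⟨(y : A' ⊗[K] A''), y.2, fun x hx hxy => hy ?_⟩
  exact ⟨⟨x, hx⟩, Subtype.ext (by exact hxy)⟩
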